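/- For positive integers n, l and parameters x, z, q with denominators nonzero: ∑_{i=1}^n [(x;q)_i (zq;q)_{i-1} q^i / (q;q)_i] · h_{l-1}(q^i/(1-zq^i), ..., q^n/(1-zq^n)) = [(zq;q)_n/(q;q)_n] · ∑_{i=1}^n [n choose i]_q (-1)^{i-1} q^{binom(i,2)+il} (1 - x^i)/(1 - zq^i)^l. -/

import Mathlib

noncomputable def qPoch (q a : ℝ) (n : ℕ) : ℝ := ∏ j ∈ Finset.range n, (1 - a * q ^ j)

noncomputable def qBinom (q : ℝ) (n r : ℕ) : ℝ :=
  if r ≤ n then qPoch q q n / (qPoch q q r * qPoch q q (n - r)) else 0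

/-- Complete homogeneous symmetric polynomial `h_k` of the entries of a list. -/
noncomputable def hPoly : List ℝ → ℕ → ℝ
  | _, 0 => 1
  | [], _ + 1 => 0
  | a :: as, k + 1 => a * hPoly (a :: as) k + hPoly as (k + 1)
termination_by l k => (l.length, k)

/-- The list `[f i, f (i+1), …, f n]`. -/
def varList (f : ℕ → ℝ) (i n : ℕ) : List ℝ := (List.range (n + 1 - i)).map fun j => f (i + j)

open Finset

section Aux

lemma qPoch_zero (q a : ℝ) : qPoch q a 0 = 1 := by simp [qPoch]

lemma qPoch_succ (q a : ℝ) (n : ℕ) : qPoch q a (n+1) = qPoch q a n * (1 - a * q^n) :=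
  Finset.prod_range_succ _ _

lemma qPochQ_ne (q : ℝ) (hden1 : ∀ j : ℕ, 1 ≤ j → 1 - q ^ j ≠ 0) (m : ℕ) :
    qPoch q q m ≠ 0 := by
  refine Finset.prod_ne_zero_iff.mpr fun j _ => ?_
  have : q * q ^ j = q ^ (j+1) := by ring
  rw [this]; exact hden1 (j+1) (by omega)

lemma qBinom_self (q : ℝ) (hden1 : ∀ j : ℕ, 1 ≤ j → 1 - q ^ j ≠ 0) (n : ℕ) :
    qBinom q n n = 1 := by
  unfold qBinom
  simp [qPoch_zero, div_self (qPochQ_ne q hden1 n)]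

lemma qBinom_zero (q : ℝ) (hden1 : ∀ j : ℕ, 1 ≤ j → 1 - q ^ j ≠ 0) (n : ℕ) :
    qBinom q n 0 = 1 := by
  unfold qBinom
  simp [qPoch_zero, div_self (qPochQ_ne q hden1 n)]

lemma qBinom_of_gt (q : ℝ) {n r : ℕ} (h : n < r) : qBinom q n r = 0 := by
  unfold qBinom; simp [Nat.not_le.mpr h]

lemma qBinom_key (q : ℝ) (hden1 : ∀ j : ℕ, 1 ≤ j → 1 - q ^ j ≠ 0) {n i : ℕ} (h : i ≤ n + 1) :
    (1 - q ^ (n + 1 - i)) * qBinom q (n+1) i = (1 - q ^ (n+1)) * qBinom q n i := by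
  rcases Nat.lt_or_ge n i with hlt | hle
  · have : i = n + 1 := by omega
    subst this
    simp [qBinom_of_gt q (by omega : n < n+1)]
  · obtain ⟨j, rfl⟩ : ∃ j, n = i + j := ⟨n - i, by omega⟩
    unfold qBinom
    rw [if_pos (by omega), if_pos (by omega)]
    have e1 : i + j + 1 - i = j + 1 := by omega
    have e2 : i + j - i = j := by omega
    rw [e1, e2, qPoch_succ q q (i+j), qPoch_succ q q j]
    have h1 := qPochQ_ne q hden1 i
    have h2 := qPochQ_ne q hden1 j
    have h3 := hden1 (j+1) (by omega)
    have h4 : (1:ℝ) - q * q ^ j ≠ 0 := by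
      have : q * q ^ j = q ^ (j+1) := by ring
      rw [this]; exact h3
    field_simp
    ring

lemma qBinom_pascal (q : ℝ) (hden1 : ∀ j : ℕ, 1 ≤ j → 1 - q ^ j ≠ 0) (m i : ℕ) :
    qBinom q (m+1) (i+1) = q^(i+1) * qBinom q m (i+1) + qBinom q m i := by
  rcases Nat.lt_or_ge m (i+1) with hlt | hle
  · rcases Nat.lt_or_ge m i with hlt2 | hle2
    · rw [qBinom_of_gt q (by omega), qBinom_of_gt q (by omega), qBinom_of_gt q (by omega)]
      ring
    · have : i = m := by omega
      subst this
      rw [qBinom_self q hden1 (i+1), qBinom_of_gt q (show i < i+1 by omega), qBinom_self q hden1 i]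
      ring
  · obtain ⟨j, rfl⟩ : ∃ j, m = i + 1 + j := ⟨m - i - 1, by omega⟩
    unfold qBinom
    rw [if_pos (by omega), if_pos (by omega), if_pos (by omega)]
    have e1 : i + 1 + j + 1 - (i + 1) = j + 1 := by omega
    have e2 : i + 1 + j - (i + 1) = j := by omega
    have e3 : i + 1 + j - i = j + 1 := by omega
    rw [e1, e2, e3, qPoch_succ q q (i+1+j), qPoch_succ q q j, qPoch_succ q q i]
    have h1 := qPochQ_ne q hden1 i
    have h2 := qPochQ_ne q hden1 j
    have h3 : (1:ℝ) - q * q ^ j ≠ 0 := by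
      have : q * q ^ j = q ^ (j+1) := by ring
      rw [this]; exact hden1 (j+1) (by omega)
    have h4 : (1:ℝ) - q * q ^ i ≠ 0 := by
      have : q * q ^ i = q ^ (i+1) := by ring
      rw [this]; exact hden1 (i+1) (by omega)
    field_simp
    ring

lemma tri_succ (i : ℕ) : (i+1)*(i+1-1)/2 = i*(i-1)/2 + i := by
  rw [show (i+1)*(i+1-1)/2 = (i+1).choose 2 by rw [Nat.choose_two_right],
      show i*(i-1)/2 = i.choose 2 by rw [Nat.choose_two_right],
      Nat.choose_succ_succ]
  simp [Nat.choose_one_right, Nat.add_comm]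

lemma qPoch_shift (q t : ℝ) (m : ℕ) : qPoch q t (m+1) = (1-t) * qPoch q (t*q) m := by
  unfold qPoch
  rw [Finset.prod_range_succ', mul_comm]
  congr 1
  · simp
  · exact Finset.prod_congr rfl fun j _ => by ring

lemma qbt (q : ℝ) (hden1 : ∀ j : ℕ, 1 ≤ j → 1 - q ^ j ≠ 0) :
    ∀ (m : ℕ) (t : ℝ),
      ∑ i ∈ range (m+1), qBinom q m i * (-1)^i * q^(i*(i-1)/2) * t^i = qPoch q t m := by
  intro m
  induction m with
  | zero => intro t; simp [qBinom_zero q hden1, qPoch_zero]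
  | succ m ih =>
    intro t
    set g : ℕ → ℝ := fun j => qBinom q m j * (-1)^j * q^(j*(j-1)/2) * (t*q)^j with hg
    have hsplit : ∀ i ∈ range (m+1),
        qBinom q (m+1) (i+1) * (-1)^(i+1) * q^((i+1)*(i+1-1)/2) * t^(i+1)
        = g (i+1) + (-t) * g i := by
      intro i _
      simp only [hg, tri_succ]
      rw [qBinom_pascal q hden1 m i]
      ring
    rw [Finset.sum_range_succ']
    rw [Finset.sum_congr rfl hsplit, Finset.sum_add_distrib]
    have h2 : ∑ i ∈ range (m+2), g i = (∑ i ∈ range (m+1), g (i+1)) + g 0 :=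
      Finset.sum_range_succ' g (m+1)
    have h3 : ∑ i ∈ range (m+2), g i = (∑ i ∈ range (m+1), g i) + g (m+1) :=
      Finset.sum_range_succ g (m+1)
    have h4 : g (m+1) = 0 := by simp [hg, qBinom_of_gt q (Nat.lt_succ_self m)]
    have h5 : ∑ i ∈ range (m+1), g i = qPoch q (t*q) m := ih (t*q)
    have hg0 : g 0 = 1 := by simp [hg, qBinom_zero q hden1]
    have hF : ∑ i ∈ range (m+1), g (i+1) = qPoch q (t*q) m - 1 := by
      rw [← h5]; linarith [h2, h3]
    have hS : ∑ i ∈ range (m+1), (-t) * g i = -t * qPoch q (t*q) m := by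
      rw [← Finset.mul_sum, h5]
    have hf0 : qBinom q (m+1) 0 * (-1)^0 * q^(0*(0-1)/2) * t^0 = 1 := by
      simp [qBinom_zero q hden1]
    rw [hF, hS, hf0, qPoch_shift]
    ring

lemma qPoch_one (q : ℝ) (m : ℕ) (hm : 1 ≤ m) : qPoch q 1 m = 0 := by
  apply Finset.prod_eq_zero (Finset.mem_range.mpr (show 0 < m by omega))
  simp

lemma range_succ_eq_insert (m : ℕ) : range (m+1) = insert 0 (Icc 1 m) := by
  ext j; simp only [Finset.mem_range, Finset.mem_insert, Finset.mem_Icc]; omega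

lemma xid (q x : ℝ) (hden1 : ∀ j : ℕ, 1 ≤ j → 1 - q ^ j ≠ 0) (m : ℕ) (hm : 1 ≤ m) :
    ∑ i ∈ Icc 1 m, qBinom q m i * (-1)^(i-1) * q^(i*(i-1)/2) * (1 - x^i) = qPoch q x m := by
  have h1 := qbt q hden1 m x
  have h2 := qbt q hden1 m 1
  rw [range_succ_eq_insert, Finset.sum_insert (by simp)] at h1 h2
  have hterm : ∀ i ∈ Icc 1 m,
      qBinom q m i * (-1)^(i-1) * q^(i*(i-1)/2) * (1 - x^i)
      = qBinom q m i * (-1)^i * q^(i*(i-1)/2) * x^i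
        - qBinom q m i * (-1)^i * q^(i*(i-1)/2) * (1:ℝ)^i := by
    intro i hi
    rw [Finset.mem_Icc] at hi
    obtain ⟨j, rfl⟩ : ∃ j, i = j + 1 := ⟨i - 1, by omega⟩
    simp only [Nat.add_sub_cancel, pow_succ, one_pow]
    ring
  rw [Finset.sum_congr rfl hterm, Finset.sum_sub_distrib]
  have e1 : ∑ i ∈ Icc 1 m, qBinom q m i * (-1)^i * q^(i*(i-1)/2) * x^i = qPoch q x m - 1 := by
    have : qBinom q m 0 * (-1)^0 * q^(0*(0-1)/2) * x^0 = 1 := by simp [qBinom_zero q hden1]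
    linarith [h1]
  have e2 : ∑ i ∈ Icc 1 m, qBinom q m i * (-1)^i * q^(i*(i-1)/2) * (1:ℝ)^i = -1 := by
    have h0 : qBinom q m 0 * (-1)^0 * q^(0*(0-1)/2) * (1:ℝ)^0 = 1 := by simp [qBinom_zero q hden1]
    have := qPoch_one q m hm
    linarith [h2]
  rw [e1, e2]; ring

lemma lemB_term (q z x : ℝ) (hden1 : ∀ j : ℕ, 1 ≤ j → 1 - q ^ j ≠ 0)
    (hden2 : ∀ j : ℕ, 1 ≤ j → 1 - z * q ^ j ≠ 0) (n i : ℕ) (h1 : 1 ≤ i) (h2 : i ≤ n+1) :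
    (1-z*q^(n+1)) * (qBinom q (n+1) i * (-1)^(i-1) * q^(i*(i-1)/2 + i) * (1-x^i) / (1-z*q^i))
    = (1-q^(n+1)) * (qBinom q n i * (-1)^(i-1) * q^(i*(i-1)/2 + i) * (1-x^i) / (1-z*q^i))
      + q^(n+1) * (qBinom q (n+1) i * (-1)^(i-1) * q^(i*(i-1)/2) * (1-x^i)) := by
  have hk := qBinom_key q hden1 h2
  obtain ⟨j, hj⟩ : ∃ j, n + 1 - i = j := ⟨n+1-i, rfl⟩
  have hq1 : q^(n+1) = q^i * q^j := by rw [← pow_add]; congr 1; omega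
  rw [hj] at hk
  rw [hq1] at hk ⊢
  have hz : (1:ℝ) - z*q^i ≠ 0 := hden2 i h1
  field_simp
  linear_combination (q^(i*(i-1)/2+i) * (1-x^i)) * hk

/-- Base case `l = 1` of the corollary. -/
lemma lemB (q z x : ℝ) (hden1 : ∀ j : ℕ, 1 ≤ j → 1 - q ^ j ≠ 0)
    (hden2 : ∀ j : ℕ, 1 ≤ j → 1 - z * q ^ j ≠ 0) :
    ∀ n, 1 ≤ n →
      ∑ i ∈ Icc 1 n, qPoch q x i * qPoch q (z*q) (i-1) * q^i / qPoch q q i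
      = qPoch q (z*q) n / qPoch q q n *
          ∑ i ∈ Icc 1 n, qBinom q n i * (-1)^(i-1) * q^(i*(i-1)/2 + i) * (1-x^i) / (1-z*q^i) := by
  intro n hn
  induction n, hn using Nat.le_induction with
  | base =>
    simp only [Finset.Icc_self, Finset.sum_singleton]
    rw [qBinom_self q hden1 1]
    have hz : (1:ℝ) - z*q ≠ 0 := by have := hden2 1 le_rfl; rwa [pow_one] at this
    have hq' : (1:ℝ) - q ≠ 0 := by have := hden1 1 le_rfl; rwa [pow_one] at this
    simp only [qPoch_succ, qPoch_zero, pow_zero, pow_one, mul_one, one_mul, Nat.sub_self]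
    have hz2 : (1:ℝ) - q*z ≠ 0 := by rwa [mul_comm] at hz
    field_simp
    ring
  | succ n hn ih =>
    rw [Finset.sum_Icc_succ_top (show 1 ≤ n+1 by omega), ih,
        Finset.sum_Icc_succ_top (show 1 ≤ n+1 by omega)]
    set S : ℝ := ∑ i ∈ Icc 1 n,
      qBinom q n i * (-1)^(i-1) * q^(i*(i-1)/2 + i) * (1-x^i) / (1-z*q^i) with hSdef
    set T : ℝ := (∑ i ∈ Icc 1 n,
      qBinom q (n+1) i * (-1)^(i-1) * q^(i*(i-1)/2 + i) * (1-x^i) / (1-z*q^i))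
      + qBinom q (n+1) (n+1) * (-1)^(n+1-1) * q^((n+1)*((n+1)-1)/2 + (n+1)) * (1-x^(n+1))
        / (1-z*q^(n+1)) with hTdef
    have hT : T = ∑ i ∈ Icc 1 (n+1),
        qBinom q (n+1) i * (-1)^(i-1) * q^(i*(i-1)/2 + i) * (1-x^i) / (1-z*q^i) := by
      rw [Finset.sum_Icc_succ_top (show 1 ≤ n+1 by omega)]
    have hS' : ∑ i ∈ Icc 1 (n+1),
        qBinom q n i * (-1)^(i-1) * q^(i*(i-1)/2 + i) * (1-x^i) / (1-z*q^i) = S := by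
      rw [Finset.sum_Icc_succ_top (show 1 ≤ n+1 by omega),
          qBinom_of_gt q (show n < n+1 by omega)]
      simp [S]
    have hclaim : (1-z*q^(n+1)) * T = (1-q^(n+1)) * S + q^(n+1) * qPoch q x (n+1) := by
      rw [hT, Finset.mul_sum]
      have := fun i (hi : i ∈ Icc 1 (n+1)) =>
        lemB_term q z x hden1 hden2 n i (Finset.mem_Icc.mp hi).1 (Finset.mem_Icc.mp hi).2
      rw [Finset.sum_congr rfl this, Finset.sum_add_distrib, ← Finset.mul_sum, ← Finset.mul_sum,
          hS', xid q x hden1 (n+1) (by omega)]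
    have hz1 : (1:ℝ) - z*q^(n+1) ≠ 0 := hden2 (n+1) (by omega)
    have hTval : T = ((1-q^(n+1)) * S + q^(n+1) * qPoch q x (n+1)) / (1-z*q^(n+1)) := by
      rw [eq_div_iff hz1]; linarith [hclaim]
    rw [hTval, qPoch_succ q (z*q) n, qPoch_succ q q n]
    have hq2 : q * q^n = q^(n+1) := by ring
    have hzq2 : z * q * q^n = z * q^(n+1) := by ring
    rw [hq2, hzq2, show n + 1 - 1 = n by omega]
    have e1 : (1:ℝ) - q^(n+1) ≠ 0 := hden1 (n+1) (by omega)
    have e2 := qPochQ_ne q hden1 n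
    field_simp

lemma hPoly_zero (L : List ℝ) : hPoly L 0 = 1 := by rw [hPoly]

lemma hPoly_nil (k : ℕ) : hPoly [] (k+1) = 0 := by rw [hPoly]

lemma hPoly_cons (a : ℝ) (as : List ℝ) (k : ℕ) :
    hPoly (a::as) (k+1) = a * hPoly (a::as) k + hPoly as (k+1) := by rw [hPoly]

lemma varList_cons (f : ℕ → ℝ) (i n : ℕ) (h : i ≤ n) :
    varList f i n = f i :: varList f (i+1) n := by
  unfold varList
  have e : n + 1 - i = (n + 1 - (i+1)) + 1 := by omega
  rw [e, List.range_succ_eq_map]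
  simp [List.map_map, Function.comp, Nat.add_comm, Nat.add_assoc, Nat.add_left_comm]

lemma varList_self (f : ℕ → ℝ) (n : ℕ) : varList f n n = [f n] := by
  unfold varList
  rw [show n + 1 - n = 1 by omega, show List.range 1 = [0] from rfl]
  simp

lemma Icc_insert_bot {i n : ℕ} (h : i ≤ n) : Finset.Icc i n = insert i (Finset.Icc (i+1) n) := by
  ext m; simp only [Finset.mem_Icc, Finset.mem_insert]; omega

lemma hmin (f : ℕ → ℝ) (k : ℕ) :
    ∀ d i n, i ≤ n → n - i = d →
      hPoly (varList f i n) (k+1) = ∑ m ∈ Icc i n, f m * hPoly (varList f m n) k := by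
  intro d
  induction d with
  | zero =>
    intro i n h hd
    have : i = n := by omega
    subst this
    rw [varList_self, hPoly_cons, hPoly_nil]
    simp [varList_self]
  | succ d ih =>
    intro i n h hd
    rw [varList_cons f i n h, hPoly_cons, ← varList_cons f i n h,
        ih (i+1) n (by omega) (by omega),
        Icc_insert_bot h, Finset.sum_insert (by simp [Finset.mem_Icc])]

lemma sum_Icc_comm (a n : ℕ) (f : ℕ → ℕ → ℝ) :
    ∑ i ∈ Icc a n, ∑ m ∈ Icc i n, f i m = ∑ m ∈ Icc a n, ∑ i ∈ Icc a m, f i m :=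
  Finset.sum_comm' (by intro i m; simp only [Finset.mem_Icc]; omega)

lemma lemC (q z : ℝ) (hden1 : ∀ j : ℕ, 1 ≤ j → 1 - q ^ j ≠ 0)
    (hden2 : ∀ j : ℕ, 1 ≤ j → 1 - z * q ^ j ≠ 0)
    (lemP : ∀ (i : ℕ), 1 ≤ i → ∀ n, i ≤ n →
      ∑ k ∈ Icc i n, (q^k/(1-z*q^k)) * (qPoch q (z*q) k / qPoch q q k) * qBinom q k i
        = qPoch q (z*q) n / qPoch q q n * qBinom q n i * (q^i/(1-z*q^i))) :
    ∀ (L : ℕ) {i n : ℕ}, 1 ≤ i → i ≤ n →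
      ∑ k ∈ Icc i n,
        hPoly (varList (fun j => q^j/(1-z*q^j)) k n) L * (q^k/(1-z*q^k))
          * (qPoch q (z*q) k / qPoch q q k) * qBinom q k i
      = qPoch q (z*q) n / qPoch q q n * qBinom q n i * (q^(i*(L+1)) / (1-z*q^i)^(L+1)) := by
  intro L
  induction L with
  | zero =>
    intro i n h1 hin
    simp only [hPoly_zero, one_mul, mul_one, pow_one]
    rw [lemP i h1 n hin]
    norm_num
  | succ L ih =>
    intro i n h1 hin
    have hexp : ∀ k ∈ Icc i n,
        hPoly (varList (fun j => q^j/(1-z*q^j)) k n) (L+1) * (q^k/(1-z*q^k))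
          * (qPoch q (z*q) k / qPoch q q k) * qBinom q k i
        = ∑ m ∈ Icc k n,
            (q^m/(1-z*q^m)) * hPoly (varList (fun j => q^j/(1-z*q^j)) m n) L
              * ((q^k/(1-z*q^k)) * (qPoch q (z*q) k / qPoch q q k) * qBinom q k i) := by
      intro k hk
      rw [Finset.mem_Icc] at hk
      rw [hmin (fun j => q^j/(1-z*q^j)) L (n-k) k n hk.2 rfl, Finset.sum_mul, Finset.sum_mul,
        Finset.sum_mul]
      exact Finset.sum_congr rfl fun m _ => by ring
    rw [Finset.sum_congr rfl hexp, sum_Icc_comm]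
    have hinner : ∀ m ∈ Icc i n,
        ∑ k ∈ Icc i m,
            (q^m/(1-z*q^m)) * hPoly (varList (fun j => q^j/(1-z*q^j)) m n) L
              * ((q^k/(1-z*q^k)) * (qPoch q (z*q) k / qPoch q q k) * qBinom q k i)
        = hPoly (varList (fun j => q^j/(1-z*q^j)) m n) L * (q^m/(1-z*q^m))
            * (qPoch q (z*q) m / qPoch q q m) * qBinom q m i
            * (q^i/(1-z*q^i)) := by
      intro m hm
      rw [Finset.mem_Icc] at hm
      rw [← Finset.mul_sum, lemP i h1 m hm.1]
      ring
    rw [Finset.sum_congr rfl hinner, ← Finset.sum_mul, ih h1 hin]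
    have hz : (1:ℝ) - z*q^i ≠ 0 := hden2 i h1
    rw [show i*(L+1+1) = i*(L+1) + i by ring]
    rw [pow_add, pow_succ (1 - z*q^i) (L+1)]
    field_simp
    ring

lemma lemP (q z : ℝ) (hden1 : ∀ j : ℕ, 1 ≤ j → 1 - q ^ j ≠ 0)
    (hden2 : ∀ j : ℕ, 1 ≤ j → 1 - z * q ^ j ≠ 0)
    (i : ℕ) (h1 : 1 ≤ i) :
    ∀ n, i ≤ n →
      ∑ k ∈ Icc i n, (q^k/(1-z*q^k)) * (qPoch q (z*q) k / qPoch q q k) * qBinom q k i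
        = qPoch q (z*q) n / qPoch q q n * qBinom q n i * (q^i/(1-z*q^i)) := by
  intro n hn
  induction n, hn using Nat.le_induction with
  | base =>
    rw [Finset.Icc_self, Finset.sum_singleton, qBinom_self q hden1]
    ring
  | succ n hin ihn =>
    rw [Finset.sum_Icc_succ_top (by omega : i ≤ n+1), ihn]
    have hk := qBinom_key q hden1 (show i ≤ n + 1 by omega)
    obtain ⟨j, hj⟩ : ∃ j, n + 1 - i = j + 1 := ⟨n - i, by omega⟩
    rw [hj] at hk
    have hq1 : q ^ (n+1) = q^i * q^(j+1) := by rw [← pow_add]; congr 1; omega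
    rw [hq1] at hk ⊢
    rw [qPoch_succ q (z*q) n, qPoch_succ q q n]
    have e1 : (1:ℝ) - z*q^i ≠ 0 := hden2 i h1
    have e2 : (1:ℝ) - z*(q^i*q^(j+1)) ≠ 0 := by
      rw [← pow_add]; exact hden2 _ (by omega)
    have e4 : (1:ℝ) - q^(j+1) ≠ 0 := hden1 _ (by omega)
    have e5 := qPochQ_ne q hden1 n
    have hqq : q * q^n = q^i * q^(j+1) := by rw [show q*q^n = q^(n+1) by ring, hq1]
    rw [hqq, show z*q*q^n = z*(q^i*q^(j+1)) by rw [← hqq]; ring]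
    have e6 : (1:ℝ) - q^i*q^(j+1) ≠ 0 := by
      rw [← pow_add]; exact hden1 _ (by omega)
    have hB : qBinom q n i = (1 - q^(j+1)) * qBinom q (n+1) i / (1 - q^i*q^(j+1)) := by
      rw [eq_div_iff e6]; linarith [hk]
    rw [hB]
    have e2' : (1:ℝ) - z * q^(j+1) * q^i ≠ 0 := by rw [mul_assoc, mul_comm (q^(j+1))]; exact e2
    have e6' : (1:ℝ) - q^(j+1) * q^i ≠ 0 := by rw [mul_comm]; exact e6
    field_simp
    ring

end Aux

/-- Corollary 3.2(a). -/
theorem cor32a (q z x : ℝ) (n l : ℕ) (hn : 0 < n) (hl : 0 < l)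
    (hden1 : ∀ j : ℕ, 1 ≤ j → 1 - q ^ j ≠ 0)
    (hden2 : ∀ j : ℕ, 1 ≤ j → 1 - z * q ^ j ≠ 0) :
    (∑ i ∈ Finset.Icc 1 n,
        qPoch q x i * qPoch q (z * q) (i - 1) * q ^ i / qPoch q q i *
          hPoly (varList (fun j => q ^ j / (1 - z * q ^ j)) i n) (l - 1)) =
      qPoch q (z * q) n / qPoch q q n *
        ∑ i ∈ Finset.Icc 1 n,
          qBinom q n i * (-1) ^ (i - 1) * q ^ (i * (i - 1) / 2 + i * l) * (1 - x ^ i) /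
            (1 - z * q ^ i) ^ l := by
  obtain ⟨L, rfl⟩ : ∃ L, l = L + 1 := ⟨l - 1, by omega⟩
  simp only [Nat.add_sub_cancel]
  have lemC' := lemC q z hden1 hden2 (fun i h1 => lemP q z hden1 hden2 i h1)
  cases L with
  | zero =>
    simp only [hPoly_zero, mul_one, zero_add, Nat.mul_one, pow_one]
    exact lemB q z x hden1 hden2 n hn
  | succ K =>
    have st1 : ∀ i ∈ Icc 1 n,
        qPoch q x i * qPoch q (z * q) (i - 1) * q ^ i / qPoch q q i *
          hPoly (varList (fun j => q ^ j / (1 - z * q ^ j)) i n) (K+1)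
        = ∑ m ∈ Icc i n,
            (qPoch q x i * qPoch q (z * q) (i - 1) * q ^ i / qPoch q q i) *
              ((q^m/(1-z*q^m)) * hPoly (varList (fun j => q ^ j / (1 - z * q ^ j)) m n) K) := by
      intro i hi
      rw [Finset.mem_Icc] at hi
      rw [hmin (fun j => q^j/(1-z*q^j)) K (n-i) i n hi.2 rfl, Finset.mul_sum]
    rw [Finset.sum_congr rfl st1, sum_Icc_comm]
    have st2 : ∀ m ∈ Icc 1 n,
        ∑ i ∈ Icc 1 m,
            (qPoch q x i * qPoch q (z * q) (i - 1) * q ^ i / qPoch q q i) *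
              ((q^m/(1-z*q^m)) * hPoly (varList (fun j => q ^ j / (1 - z * q ^ j)) m n) K)
        = ∑ i ∈ Icc 1 m,
            hPoly (varList (fun j => q ^ j / (1 - z * q ^ j)) m n) K * (q^m/(1-z*q^m))
              * (qPoch q (z*q) m / qPoch q q m) * qBinom q m i
              * ((-1)^(i-1) * q^(i*(i-1)/2 + i) * (1-x^i) / (1-z*q^i)) := by
      intro m hm
      rw [Finset.mem_Icc] at hm
      rw [← Finset.sum_mul, lemB q z x hden1 hden2 m hm.1]
      rw [show (qPoch q (z*q) m / qPoch q q m *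
            ∑ i ∈ Icc 1 m, qBinom q m i * (-1)^(i-1) * q^(i*(i-1)/2 + i) * (1-x^i) / (1-z*q^i))
            * ((q^m/(1-z*q^m)) * hPoly (varList (fun j => q ^ j / (1 - z * q ^ j)) m n) K)
          = (∑ i ∈ Icc 1 m, qBinom q m i * (-1)^(i-1) * q^(i*(i-1)/2 + i) * (1-x^i) / (1-z*q^i))
            * (qPoch q (z*q) m / qPoch q q m *
               ((q^m/(1-z*q^m)) * hPoly (varList (fun j => q ^ j / (1 - z * q ^ j)) m n) K))
          by ring]
      rw [Finset.sum_mul]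
      exact Finset.sum_congr rfl fun i _ => by ring
    rw [Finset.sum_congr rfl st2, ← sum_Icc_comm]
    have st3 : ∀ i ∈ Icc 1 n,
        ∑ m ∈ Icc i n,
            hPoly (varList (fun j => q ^ j / (1 - z * q ^ j)) m n) K * (q^m/(1-z*q^m))
              * (qPoch q (z*q) m / qPoch q q m) * qBinom q m i
              * ((-1)^(i-1) * q^(i*(i-1)/2 + i) * (1-x^i) / (1-z*q^i))
        = qPoch q (z * q) n / qPoch q q n *
            (qBinom q n i * (-1)^(i-1) * q^(i*(i-1)/2 + i*(K+1+1)) * (1-x^i)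
              / (1-z*q^i)^(K+1+1)) := by
      intro i hi
      rw [Finset.mem_Icc] at hi
      rw [← Finset.sum_mul, lemC' K hi.1 hi.2]
      have hz : (1:ℝ) - z*q^i ≠ 0 := hden2 i hi.1
      rw [show i*(i-1)/2 + i*(K+1+1) = (i*(K+1)) + (i*(i-1)/2 + i) by ring]
      rw [pow_add, show K+1+1 = (K+1)+1 from rfl, pow_succ (1 - z*q^i) (K+1)]
      have hzp : ((1:ℝ) - z*q^i)^(K+1) ≠ 0 := pow_ne_zero _ hz
      field_simp
      ring
    rw [Finset.sum_congr rfl st3, ← Finset.mul_sum]
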